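/- Let z > 0 and let p, q > 1 be real with 1/p + 1/q = 1. Then for all real x and y, the Turán-type inequality K_{x/p + y/q}(z) ≤ K_x(z)^{1/p} · K_y(z)^{1/q} holds. -/

import Mathlib

/-- The modified Bessel function of the second kind,
`K_ν(z) = (1/2) ∫_0^∞ t^{ν-1} exp(-z(t + 1/t)/2) dt`. -/
noncomputable def besselK (ν z : ℝ) : ℝ :=
  (1 / 2) * ∫ t in Set.Ioi (0 : ℝ), t ^ (ν - 1) * Real.exp (-z * (t + 1 / t) / 2)

open MeasureTheory Real Set Nat

lemma besselK_integrand_aesm (ν z : ℝ) :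
    AEStronglyMeasurable (fun t : ℝ => t ^ (ν - 1) * Real.exp (-z * (t + 1 / t) / 2))
      (volume.restrict (Ioi (0 : ℝ))) := by
  apply ContinuousOn.aestronglyMeasurable _ measurableSet_Ioi
  intro t ht
  have ht0 : (0:ℝ) < t := ht
  apply ContinuousWithinAt.mul
  · exact continuousWithinAt_id.rpow_const (Or.inl ht0.ne')
  · exact (((continuousAt_const.mul (continuousAt_id.add
      (continuousAt_const.div continuousAt_id ht0.ne'))).div_const 2).rexp).continuousWithinAt

lemma besselK_integrand_integrable (ν z : ℝ) (hz : 0 < z) :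
    IntegrableOn (fun t : ℝ => t ^ (ν - 1) * Real.exp (-z * (t + 1 / t) / 2)) (Ioi 0) := by
  obtain ⟨n, hn⟩ : ∃ n : ℕ, -1 < ν - 1 + n := by
    refine ⟨⌈|ν|⌉₊ + 1, ?_⟩
    have h1 : -ν ≤ |ν| := neg_le_abs ν
    have h2 : |ν| ≤ ⌈|ν|⌉₊ := Nat.le_ceil _
    push_cast
    linarith
  set C : ℝ := (n ! : ℝ) * (2 / z) ^ n with hC
  have hC0 : 0 ≤ C := by positivity
  have hdom : IntegrableOn (fun t : ℝ => C * (t ^ (ν - 1 + n) * Real.exp (-(z / 2) * t)))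
      (Ioi 0) := by
    have := integrableOn_rpow_mul_exp_neg_mul_rpow hn (zero_lt_one' ℝ)
      (show (0:ℝ) < z / 2 by positivity)
    simpa [IntegrableOn] using this.const_mul C
  refine hdom.mono' (besselK_integrand_aesm ν z) ?_
  rw [ae_restrict_iff' measurableSet_Ioi]
  refine Filter.Eventually.of_forall fun t ht => ?_
  have ht : (0:ℝ) < t := ht
  have hexp : Real.exp (-z * (t + 1 / t) / 2)
      = Real.exp (-(z / 2) * t) * Real.exp (-(z / 2) / t) := by
    rw [← Real.exp_add]; ring_nf
  have hkey : Real.exp (-(z / 2) / t) ≤ C * t ^ (n : ℝ) := by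
    have hs : (0:ℝ) < (z / 2) / t := by positivity
    have h1 : ((z / 2) / t) ^ n / n ! ≤ Real.exp ((z / 2) / t) :=
      Real.pow_div_factorial_le_exp _ hs.le n
    have h2 : Real.exp (-(z / 2) / t) = (Real.exp ((z / 2) / t))⁻¹ := by
      rw [← Real.exp_neg]; ring_nf
    rw [h2]
    have h3 : (Real.exp ((z / 2) / t))⁻¹ ≤ (((z / 2) / t) ^ n / n !)⁻¹ := by
      exact inv_anti₀ (by positivity) h1
    refine h3.trans (le_of_eq ?_)
    rw [Real.rpow_natCast]
    rw [hC]
    rw [inv_div, div_pow, div_pow, div_pow]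
    field_simp
  have hnorm : ‖t ^ (ν - 1) * Real.exp (-z * (t + 1 / t) / 2)‖
      = t ^ (ν - 1) * Real.exp (-z * (t + 1 / t) / 2) := by
    rw [Real.norm_eq_abs, abs_of_nonneg]
    positivity
  rw [hnorm, hexp]
  calc t ^ (ν - 1) * (Real.exp (-(z / 2) * t) * Real.exp (-(z / 2) / t))
      ≤ t ^ (ν - 1) * (Real.exp (-(z / 2) * t) * (C * t ^ (n : ℝ))) := by
        apply mul_le_mul_of_nonneg_left _ (by positivity)
        exact mul_le_mul_of_nonneg_left hkey (by positivity)
    _ = C * (t ^ (ν - 1 + n) * Real.exp (-(z / 2) * t)) := by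
        rw [Real.rpow_add ht]; ring

theorem stmt_17 (z : ℝ) (hz : 0 < z) (p q : ℝ) (hp : 1 < p) (hq : 1 < q)
    (hpq : 1 / p + 1 / q = 1) (x y : ℝ) :
    besselK (x / p + y / q) z ≤ besselK x z ^ (1 / p) * besselK y z ^ (1 / q) := by
  have hp0 : (0:ℝ) < p := lt_trans one_pos hp
  have hq0 : (0:ℝ) < q := lt_trans one_pos hq
  set f : ℝ → ℝ → ℝ := fun ν t => t ^ (ν - 1) * Real.exp (-z * (t + 1 / t) / 2) with hf
  set F : ℝ → ENNReal := fun ν => ∫⁻ t in Ioi (0:ℝ), ENNReal.ofReal (f ν t) with hF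
  have hnonneg : ∀ ν, 0 ≤ᵐ[volume.restrict (Ioi (0:ℝ))] f ν := by
    intro ν
    filter_upwards [ae_restrict_mem measurableSet_Ioi] with t ht
    have ht : (0:ℝ) < t := ht
    simp only [hf]
    positivity
  have hbesselK : ∀ ν, besselK ν z = (1 / 2) * (F ν).toReal := by
    intro ν
    rw [besselK, integral_eq_lintegral_of_nonneg_ae (hnonneg ν) (besselK_integrand_aesm ν z)]
  have hfin : ∀ ν, F ν ≠ ⊤ := fun ν =>
    ((besselK_integrand_integrable ν z hz).lintegral_lt_top).ne
  have hconj : p.HolderConjugate q := Real.holderConjugate_iff.mpr ⟨hp, by simpa [one_div] using hpq⟩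
  -- pointwise identity
  have hpoint : ∀ t : ℝ, 0 < t → f x t ^ (1 / p) * f y t ^ (1 / q) = f (x / p + y / q) t := by
    intro t ht
    have harg : (x - 1) * (1 / p) + (y - 1) * (1 / q) = x / p + y / q - 1 := by
      linear_combination -hpq
    have hexps : Real.exp (-z * (t + 1 / t) / 2) ^ (1 / p)
        * Real.exp (-z * (t + 1 / t) / 2) ^ (1 / q) = Real.exp (-z * (t + 1 / t) / 2) := by
      rw [← Real.rpow_add (Real.exp_pos _), hpq, Real.rpow_one]
    have ht1 : (t ^ (x - 1)) ^ (1 / p) * (t ^ (y - 1)) ^ (1 / q)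
        = t ^ (x / p + y / q - 1) := by
      rw [← Real.rpow_mul ht.le, ← Real.rpow_mul ht.le, ← Real.rpow_add ht, harg]
    simp only [hf]
    rw [Real.mul_rpow (by positivity) (Real.exp_pos _).le,
      Real.mul_rpow (by positivity) (Real.exp_pos _).le]
    calc (t ^ (x - 1)) ^ (1 / p) * Real.exp (-z * (t + 1 / t) / 2) ^ (1 / p)
          * ((t ^ (y - 1)) ^ (1 / q) * Real.exp (-z * (t + 1 / t) / 2) ^ (1 / q))
        = ((t ^ (x - 1)) ^ (1 / p) * (t ^ (y - 1)) ^ (1 / q))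
          * (Real.exp (-z * (t + 1 / t) / 2) ^ (1 / p)
            * Real.exp (-z * (t + 1 / t) / 2) ^ (1 / q)) := by ring
      _ = t ^ (x / p + y / q - 1) * Real.exp (-z * (t + 1 / t) / 2) := by rw [ht1, hexps]
  have key : F (x / p + y / q) ≤ F x ^ (1 / p) * F y ^ (1 / q) := by
    have haem : ∀ ν, AEMeasurable (fun t => ENNReal.ofReal (f ν t))
        (volume.restrict (Ioi (0:ℝ))) := fun ν =>
      (besselK_integrand_aesm ν z).aemeasurable.ennreal_ofReal
    have holder := ENNReal.lintegral_mul_le_Lp_mul_Lq (volume.restrict (Ioi (0:ℝ))) hconj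
      ((haem x).pow_const (1 / p)) ((haem y).pow_const (1 / q))
    simp only [Pi.mul_apply, ← ENNReal.rpow_mul, one_div_mul_cancel hp0.ne',
      one_div_mul_cancel hq0.ne', ENNReal.rpow_one] at holder
    refine le_trans (le_of_eq (lintegral_congr_ae ?_)) holder
    filter_upwards [ae_restrict_mem measurableSet_Ioi] with t ht
    have ht : (0:ℝ) < t := ht
    have hfx : 0 < f x t := by simp only [hf]; positivity
    have hfy : 0 < f y t := by simp only [hf]; positivity
    rw [ENNReal.ofReal_rpow_of_pos hfx, ENNReal.ofReal_rpow_of_pos hfy,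
      ← ENNReal.ofReal_mul (by positivity), hpoint t ht]
  -- finish
  rw [hbesselK, hbesselK, hbesselK]
  have hrhs_fin : F x ^ (1 / p) * F y ^ (1 / q) ≠ ⊤ :=
    ENNReal.mul_ne_top (ENNReal.rpow_ne_top_of_nonneg (by positivity) (hfin x))
      (ENNReal.rpow_ne_top_of_nonneg (by positivity) (hfin y))
  calc (1 / 2 : ℝ) * (F (x / p + y / q)).toReal
      ≤ (1 / 2 : ℝ) * (F x ^ (1 / p) * F y ^ (1 / q)).toReal := by
        have := ENNReal.toReal_mono hrhs_fin key
        linarith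
    _ = (1 / 2 * (F x).toReal) ^ (1 / p) * (1 / 2 * (F y).toReal) ^ (1 / q) := by
        rw [Real.mul_rpow (by norm_num) ENNReal.toReal_nonneg,
          Real.mul_rpow (by norm_num) ENNReal.toReal_nonneg,
          ENNReal.toReal_rpow, ENNReal.toReal_rpow, ENNReal.toReal_mul]
        have h12 : ((1:ℝ) / 2) ^ (1 / p) * ((1:ℝ) / 2) ^ (1 / q) = 1 / 2 := by
          rw [← Real.rpow_add (by norm_num), hpq, Real.rpow_one]
        calc (1 / 2 : ℝ) * ((F x ^ (1 / p)).toReal * (F y ^ (1 / q)).toReal)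
            = (((1:ℝ) / 2) ^ (1 / p) * ((1:ℝ) / 2) ^ (1 / q))
              * ((F x ^ (1 / p)).toReal * (F y ^ (1 / q)).toReal) := by rw [h12]
          _ = ((1:ℝ) / 2) ^ (1 / p) * (F x ^ (1 / p)).toReal
              * (((1:ℝ) / 2) ^ (1 / q) * (F y ^ (1 / q)).toReal) := by ring
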